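/- arXiv:1912.01445 — 8 statements merged into one kernel-verified Lean document; each statement's English description precedes it below -/
import Mathlib

section
/- For every nonnegative integer k, the sum over j from 0 to k of binom(2j,j)*binom(2k-2j,k-j)*j*(k-j) equals 4^k * k * (k-1) / 8. -/
open Finset

private def F (n : ℕ) : ℚ := ((2 * n).choose n : ℚ)

private lemma key (i : ℕ) : ((i : ℚ) + 1) * F (i + 1) = (4 * i + 2) * F i := by
  have h := Nat.succ_mul_centralBinom_succ i
  unfold Nat.centralBinom at h
  have h' : (((i + 1) * ((2 * (i + 1)).choose (i + 1)) : ℕ) : ℚ)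
      = ((2 * (2 * i + 1) * ((2 * i).choose i) : ℕ) : ℚ) := by exact_mod_cast h
  push_cast at h'
  unfold F
  linarith

private lemma sym (k : ℕ) :
    ∑ j ∈ range (k + 1), ((j : ℚ)) * (F j * F (k - j))
      = ∑ j ∈ range (k + 1), (((k - j : ℕ) : ℚ)) * (F j * F (k - j)) := by
  rw [← Finset.sum_range_reflect]
  apply Finset.sum_congr rfl
  intro j hj
  have hjk : j ≤ k := Nat.lt_succ_iff.mp (Finset.mem_range.mp hj)
  have h1 : k + 1 - 1 - j = k - j := by omega
  have h2 : k - (k - j) = j := by omega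
  rw [h1, h2]
  ring

private lemma main (k : ℕ) :
    (∑ j ∈ range (k + 1), F j * F (k - j)) = 4 ^ k ∧
    (∑ j ∈ range (k + 1), (j : ℚ) * (F j * F (k - j))) = k * 4 ^ k / 2 ∧
    (∑ j ∈ range (k + 1), (j : ℚ) * ((k - j : ℕ) : ℚ) * (F j * F (k - j)))
      = 4 ^ k * k * ((k : ℚ) - 1) / 8 := by
  induction k with
  | zero => norm_num [F]
  | succ k ih =>
    obtain ⟨h2, h1, h0⟩ := ih
    -- weighted step sum
    have hA : (∑ j ∈ range (k + 1 + 1), (j : ℚ) * (F j * F (k + 1 - j)))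
        = (2 * k + 2) * 4 ^ k := by
      rw [Finset.sum_range_succ']
      have : ∀ i ∈ range (k + 1),
          ((i + 1 : ℕ) : ℚ) * (F (i + 1) * F (k + 1 - (i + 1)))
            = (4 * i + 2) * (F i * F (k - i)) := by
        intro i _
        have hk : k + 1 - (i + 1) = k - i := by omega
        have h := key i
        push_cast [hk]
        linear_combination F (k - i) * h
      rw [Finset.sum_congr rfl this]
      have hsplit : ∑ i ∈ range (k + 1), ((4 * i + 2 : ℚ)) * (F i * F (k - i))
          = 4 * (∑ i ∈ range (k + 1), (i : ℚ) * (F i * F (k - i)))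
            + 2 * (∑ i ∈ range (k + 1), F i * F (k - i)) := by
        rw [Finset.mul_sum, Finset.mul_sum, ← Finset.sum_add_distrib]
        apply Finset.sum_congr rfl
        intro i _
        ring
      rw [hsplit, h1, h2]
      push_cast
      ring
    -- S2 at k+1
    have hS2 : (∑ j ∈ range (k + 1 + 1), F j * F (k + 1 - j)) = 4 ^ (k + 1) := by
      have hsum : (((k : ℚ) + 1)) * (∑ j ∈ range (k + 1 + 1), F j * F (k + 1 - j))
          = (∑ j ∈ range (k + 1 + 1), (j : ℚ) * (F j * F (k + 1 - j)))
            + (∑ j ∈ range (k + 1 + 1), ((k + 1 - j : ℕ) : ℚ) * (F j * F (k + 1 - j))) := by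
        rw [Finset.mul_sum, ← Finset.sum_add_distrib]
        apply Finset.sum_congr rfl
        intro j hj
        have hjk : j ≤ k + 1 := Nat.lt_succ_iff.mp (Finset.mem_range.mp hj)
        have hc : ((k + 1 - j : ℕ) : ℚ) = (k : ℚ) + 1 - j := by
          push_cast [Nat.cast_sub hjk]; ring
        rw [hc]; ring
      rw [← sym (k + 1), hA] at hsum
      have hk1 : ((k : ℚ) + 1) ≠ 0 := by positivity
      refine mul_left_cancel₀ hk1 ?_
      rw [hsum]
      ring
    refine ⟨hS2, ?_, ?_⟩
    · rw [hA]; push_cast; ring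
    · -- S0 at k+1
      rw [Finset.sum_range_succ']
      have : ∀ i ∈ range (k + 1),
          ((i + 1 : ℕ) : ℚ) * ((k + 1 - (i + 1) : ℕ) : ℚ) * (F (i + 1) * F (k + 1 - (i + 1)))
            = (4 * i + 2) * ((k - i : ℕ) : ℚ) * (F i * F (k - i)) := by
        intro i _
        have hk : k + 1 - (i + 1) = k - i := by omega
        have h := key i
        push_cast [hk]
        linear_combination ((k - i : ℕ) : ℚ) * F (k - i) * h
      rw [Finset.sum_congr rfl this]
      have hsplit : ∑ i ∈ range (k + 1), ((4 * i + 2 : ℚ)) * ((k - i : ℕ) : ℚ) * (F i * F (k - i))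
          = 4 * (∑ i ∈ range (k + 1), (i : ℚ) * ((k - i : ℕ) : ℚ) * (F i * F (k - i)))
            + 2 * (∑ i ∈ range (k + 1), ((k - i : ℕ) : ℚ) * (F i * F (k - i))) := by
        rw [Finset.mul_sum, Finset.mul_sum, ← Finset.sum_add_distrib]
        apply Finset.sum_congr rfl
        intro i _
        ring
      rw [hsplit, h0, ← sym k, h1]
      push_cast
      ring

theorem stmt_1 (k : ℕ) :
    (∑ j ∈ Finset.range (k + 1),
      ((2 * j).choose j : ℚ) * (2 * (k - j)).choose (k - j) * j * (k - j : ℕ))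
      = 4 ^ k * k * (k - 1 : ℕ) / 8 := by
  have h := (main k).2.2
  have heq : (∑ j ∈ Finset.range (k + 1),
      ((2 * j).choose j : ℚ) * (2 * (k - j)).choose (k - j) * j * (k - j : ℕ))
      = ∑ j ∈ range (k + 1), (j : ℚ) * ((k - j : ℕ) : ℚ) * (F j * F (k - j)) := by
    apply Finset.sum_congr rfl
    intro j _
    unfold F
    ring
  rw [heq, h]
  rcases Nat.eq_zero_or_pos k with hk | hk
  · subst hk; norm_num
  · have : ((k - 1 : ℕ) : ℚ) = (k : ℚ) - 1 := by
      push_cast [Nat.cast_sub hk]; ring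
    rw [this]
end

section
/- For every nonnegative integer k, the sum over j from 0 to k of binom(2j,j)*binom(2k-2j,k-j)*(6j+1)*(6k-6j+1) equals 4^k * (9k^2 + 3k + 2) / 2. -/
open Finset

private def cb (n : ℕ) : ℚ := (Nat.centralBinom n : ℚ)

private lemma cb_key (i : ℕ) : ((i : ℚ) + 1) * cb (i + 1) = (4 * i + 2) * cb i := by
  have h := Nat.succ_mul_centralBinom_succ i
  have h' : (((i + 1) : ℚ) * Nat.centralBinom (i + 1))
      = ((2 * (2 * i + 1) : ℚ) * Nat.centralBinom i) := by exact_mod_cast h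
  push_cast at h'
  unfold cb
  linarith [h']

private lemma sumB_symm (k : ℕ) :
    ∑ j ∈ range (k + 1), ((k - j : ℕ) : ℚ) * cb j * cb (k - j)
      = ∑ j ∈ range (k + 1), (j : ℚ) * cb j * cb (k - j) := by
  rw [← Finset.sum_range_reflect]
  refine Finset.sum_congr rfl fun j hj => ?_
  have hjk : j ≤ k := Nat.lt_succ_iff.mp (Finset.mem_range.mp hj)
  have h1 : k + 1 - 1 - j = k - j := by omega
  have h2 : k - (k - j) = j := by omega
  rw [h1, h2]
  ring

private lemma sumAB (k : ℕ) :
    (∑ j ∈ range (k + 1), cb j * cb (k - j) = 4 ^ k) ∧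
    (∑ j ∈ range (k + 1), (j : ℚ) * cb j * cb (k - j) = k * 4 ^ k / 2) := by
  induction k with
  | zero => simp [cb, Nat.centralBinom]
  | succ k ih =>
    obtain ⟨hA, hB⟩ := ih
    have hBstep : ∑ j ∈ range (k + 2), (j : ℚ) * cb j * cb (k + 1 - j)
        = (k + 1) * 4 ^ (k + 1) / 2 := by
      rw [Finset.sum_range_succ']
      have : ∀ i ∈ range (k + 1),
          ((i + 1 : ℕ) : ℚ) * cb (i + 1) * cb (k + 1 - (i + 1))
            = 4 * ((i : ℚ) * cb i * cb (k - i)) + 2 * (cb i * cb (k - i)) := by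
        intro i hi
        have h1 : k + 1 - (i + 1) = k - i := by omega
        rw [h1]
        have := cb_key i
        push_cast
        linear_combination cb (k - i) * this
      rw [Finset.sum_congr rfl this, Finset.sum_add_distrib, ← Finset.mul_sum, ← Finset.mul_sum,
        hA, hB]
      push_cast
      ring
    constructor
    · have hsymm := sumB_symm (k + 1)
      have hmul : ((k : ℚ) + 1) * ∑ j ∈ range (k + 2), cb j * cb (k + 1 - j)
          = 2 * ((k + 1) * 4 ^ (k + 1) / 2) := by
        rw [Finset.mul_sum]
        have : ∀ j ∈ range (k + 2),
            ((k : ℚ) + 1) * (cb j * cb (k + 1 - j))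
              = (j : ℚ) * cb j * cb (k + 1 - j)
                + ((k + 1 - j : ℕ) : ℚ) * cb j * cb (k + 1 - j) := by
          intro j hj
          have hjk : j ≤ k + 1 := Nat.lt_succ_iff.mp (Finset.mem_range.mp hj)
          have : ((k + 1 - j : ℕ) : ℚ) = (k : ℚ) + 1 - j := by
            push_cast [Nat.cast_sub hjk]; ring
          rw [this]; ring
        rw [Finset.sum_congr rfl this, Finset.sum_add_distrib, hsymm, hBstep]
        ring
      have hk : ((k : ℚ) + 1) ≠ 0 := by positivity
      field_simp at hmul
      exact hmul
    · push_cast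
      exact hBstep

private lemma sumS2 (k : ℕ) :
    ∑ j ∈ range (k + 1), (j : ℚ) * ((k - j : ℕ) : ℚ) * cb j * cb (k - j)
      = k * (k - 1) * 4 ^ k / 8 := by
  induction k with
  | zero => simp
  | succ k ih =>
    rw [Finset.sum_range_succ']
    have hA := (sumAB k).1
    have hB := (sumAB k).2
    have : ∀ i ∈ range (k + 1),
        ((i + 1 : ℕ) : ℚ) * ((k + 1 - (i + 1) : ℕ) : ℚ) * cb (i + 1) * cb (k + 1 - (i + 1))
          = 4 * ((i : ℚ) * ((k - i : ℕ) : ℚ) * cb i * cb (k - i))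
            + 2 * (((k - i : ℕ) : ℚ) * cb i * cb (k - i)) := by
      intro i hi
      have h1 : k + 1 - (i + 1) = k - i := by omega
      rw [h1]
      have := cb_key i
      push_cast
      linear_combination ((k - i : ℕ) : ℚ) * cb (k - i) * this
    rw [Finset.sum_congr rfl this, Finset.sum_add_distrib, ← Finset.mul_sum, ← Finset.mul_sum,
      ih, sumB_symm k, hB]
    push_cast
    ring

theorem stmt_2 (k : ℕ) :
    (∑ j ∈ Finset.range (k + 1),
      ((2 * j).choose j : ℚ) * (2 * (k - j)).choose (k - j) * (6 * j + 1) * (6 * (k - j : ℕ) + 1))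
      = 4 ^ k * (9 * k ^ 2 + 3 * k + 2) / 2 := by
  have hA := (sumAB k).1
  have hB := (sumAB k).2
  have hB' := sumB_symm k
  have hS2 := sumS2 k
  have expand : ∀ j ∈ range (k + 1),
      ((2 * j).choose j : ℚ) * (2 * (k - j)).choose (k - j) * (6 * j + 1) * (6 * (k - j : ℕ) + 1)
        = 36 * ((j : ℚ) * ((k - j : ℕ) : ℚ) * cb j * cb (k - j))
          + 6 * ((j : ℚ) * cb j * cb (k - j))
          + 6 * (((k - j : ℕ) : ℚ) * cb j * cb (k - j))
          + cb j * cb (k - j) := by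
    intro j hj
    unfold cb Nat.centralBinom
    ring
  rw [Finset.sum_congr rfl expand]
  rw [Finset.sum_add_distrib, Finset.sum_add_distrib, Finset.sum_add_distrib,
    ← Finset.mul_sum, ← Finset.mul_sum, ← Finset.mul_sum, hS2, hB, hB', hB, hA]
  ring
end

section
/- For every positive integer n, the sum over k from 0 to n-1 of (1/4)^k * (sum over j from 0 to k of binom(2j,j)*binom(2k-2j,k-j)*(6j+1)*(6k-6j+1)) equals n*(3n^2 - 3n + 2)/2. -/
open Finset

noncomputable def cc (j : ℕ) : ℚ := ((2 * j).choose j : ℚ) / 4 ^ j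

lemma cc_zero : cc 0 = 1 := by simp [cc]

lemma cc_rec (j : ℕ) : (2 * (j : ℚ) + 2) * cc (j + 1) = (2 * j + 1) * cc j := by
  have h := Nat.succ_mul_centralBinom_succ j
  simp only [Nat.centralBinom] at h
  have h' : ((j : ℚ) + 1) * ((2 * (j + 1)).choose (j + 1) : ℚ)
      = 2 * (2 * j + 1) * ((2 * j).choose j : ℚ) := by exact_mod_cast congrArg (Nat.cast (R := ℚ)) h
  simp only [cc]
  rw [← mul_div_assoc, ← mul_div_assoc, div_eq_div_iff (by positivity) (by positivity)]
  linear_combination 2 * (4 : ℚ) ^ j * h'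

noncomputable def Aq (k : ℕ) : ℚ := ∑ j ∈ range (k + 1), cc j * cc (k - j)
noncomputable def Bq (k : ℕ) : ℚ := ∑ j ∈ range (k + 1), (j : ℚ) * (cc j * cc (k - j))
noncomputable def Cq (k : ℕ) : ℚ := ∑ j ∈ range (k + 1), (j : ℚ) ^ 2 * (cc j * cc (k - j))

lemma hBsym (k : ℕ) : 2 * Bq k = k * Aq k := by
  have h1 : Bq k = ∑ j ∈ range (k + 1), ((k : ℚ) - j) * (cc j * cc (k - j)) := by
    rw [Bq, ← Finset.sum_range_reflect]
    apply sum_congr rfl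
    intro j hj
    rw [mem_range] at hj
    have hj' : j ≤ k := by omega
    have e1 : k + 1 - 1 - j = k - j := by omega
    have e2 : k - (k - j) = j := by omega
    rw [e1, e2, Nat.cast_sub hj']
    ring
  have h2 : 2 * Bq k = Bq k + Bq k := by ring
  rw [h2]
  nth_rewrite 2 [h1]
  rw [Bq, Aq, ← Finset.sum_add_distrib, Finset.mul_sum]
  apply sum_congr rfl
  intro j _
  ring

lemma hBstep (k : ℕ) : Bq (k + 1) = Bq k + Aq k / 2 := by
  rw [Bq, Finset.sum_range_succ']
  simp only [Nat.cast_zero, zero_mul, add_zero, Nat.succ_sub_succ]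
  rw [Bq, Aq, Finset.sum_div, ← Finset.sum_add_distrib]
  apply sum_congr rfl
  intro i _
  push_cast
  linear_combination (cc (k - i) / 2) * cc_rec i

lemma hA : ∀ k, Aq k = 1 := by
  intro k
  induction k with
  | zero => simp [Aq, cc_zero]
  | succ k ih =>
    have h1 := hBsym k
    have h2 := hBsym (k + 1)
    rw [hBstep] at h2
    have hk : ((k : ℚ) + 1) ≠ 0 := by positivity
    have : ((k : ℚ) + 1) * Aq (k + 1) = ((k : ℚ) + 1) * 1 := by
      push_cast at h2
      linear_combination -h2 + h1 + ((k : ℚ) + 1) * ih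
    exact mul_left_cancel₀ hk this

lemma hB (k : ℕ) : Bq k = k / 2 := by
  have h := hBsym k
  rw [hA k, mul_one] at h
  linarith

lemma hCstep (k : ℕ) : Cq (k + 1) = Cq k + 3 / 2 * Bq k + Aq k / 2 := by
  rw [Cq, Finset.sum_range_succ']
  simp only [Nat.cast_zero, zero_pow, zero_mul, add_zero, Nat.succ_sub_succ, ne_eq,
    OfNat.ofNat_ne_zero, not_false_eq_true]
  rw [Cq, Bq, Aq, Finset.mul_sum, Finset.sum_div, ← Finset.sum_add_distrib,
    ← Finset.sum_add_distrib]
  apply sum_congr rfl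
  intro i _
  push_cast
  linear_combination (((i : ℚ) + 1) * cc (k - i) / 2) * cc_rec i

lemma hC : ∀ k, Cq k = k * (3 * k + 1) / 8 := by
  intro k
  induction k with
  | zero => simp [Cq, cc_zero]
  | succ k ih =>
    rw [hCstep, ih, hB, hA]
    push_cast
    ring

lemma term_eq (k : ℕ) :
    (1 / 4 : ℚ) ^ k * ∑ j ∈ Finset.range (k + 1),
      ((2 * j).choose j : ℚ) * (2 * (k - j)).choose (k - j) * (6 * j + 1) * (6 * (k - j : ℕ) + 1)
      = (9 * k ^ 2 + 3 * k + 2) / 2 := by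
  rw [Finset.mul_sum]
  have hsum : ∑ j ∈ Finset.range (k + 1), (1 / 4 : ℚ) ^ k *
      (((2 * j).choose j : ℚ) * (2 * (k - j)).choose (k - j) * (6 * j + 1) * (6 * (k - j : ℕ) + 1))
      = ∑ j ∈ Finset.range (k + 1),
        (36 * (k : ℚ) * ((j : ℚ) * (cc j * cc (k - j))) - 36 * ((j : ℚ) ^ 2 * (cc j * cc (k - j)))
          + (6 * (k : ℚ) + 1) * (cc j * cc (k - j))) := by
    apply sum_congr rfl
    intro j hj
    rw [mem_range] at hj
    have hj' : j ≤ k := by omega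
    have hpow : (4 : ℚ) ^ j * 4 ^ (k - j) = 4 ^ k := by
      rw [← pow_add]; congr 1; omega
    have hw : cc j * cc (k - j)
        = ((2 * j).choose j : ℚ) * ((2 * (k - j)).choose (k - j) : ℚ) / 4 ^ k := by
      simp only [cc]; rw [div_mul_div_comm, hpow]
    rw [hw, Nat.cast_sub hj']
    have h4 : (4 : ℚ) ^ k ≠ 0 := by positivity
    rw [one_div_pow]
    field_simp
    ring
  rw [hsum, Finset.sum_add_distrib, Finset.sum_sub_distrib, ← Finset.mul_sum, ← Finset.mul_sum,
    ← Finset.mul_sum, ← Bq, ← Cq, ← Aq, hB, hC, hA]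
  ring

theorem stmt_4 (n : ℕ) (hn : 0 < n) :
    (∑ k ∈ Finset.range n, (1 / 4 : ℚ) ^ k *
      ∑ j ∈ Finset.range (k + 1),
        ((2 * j).choose j : ℚ) * (2 * (k - j)).choose (k - j) * (6 * j + 1) * (6 * (k - j : ℕ) + 1))
      = n * (3 * n ^ 2 - 3 * n + 2) / 2 := by
  induction n with
  | zero => simp
  | succ n ih =>
    rcases Nat.eq_zero_or_pos n with h0 | hpos
    · subst h0
      simp [term_eq 0]

    · rw [Finset.sum_range_succ, ih hpos, term_eq n]
      push_cast
      ring
end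

section
/- For every odd prime p, the sum over k from 0 to p-1 of (-1/8)^k * (sum over j from 0 to k of binom(2j,j)*binom(2k-2j,k-j)*(6j+1)*(6k-6j+1)) is congruent to -p/2 modulo p^2, i.e., the rational number (LHS + p/2)/p^2 has denominator coprime to p. -/
open Finset Polynomial

private theorem ratioQ (r : ℚ) (n : ℕ) :
    Ring.choose r (n + 1) = Ring.choose r n * (r - n) / (n + 1) := by
  have h1 := Ring.descPochhammer_eq_factorial_smul_choose (R := ℚ) r (n + 1)
  have h2 := Ring.descPochhammer_eq_factorial_smul_choose (R := ℚ) r n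
  rw [descPochhammer_succ_right, smeval_mul, h2, smeval_sub, smeval_X, smeval_natCast,
    Nat.factorial_succ] at h1
  simp only [nsmul_eq_mul, pow_one, pow_zero, Nat.cast_mul, Nat.cast_add, Nat.cast_one,
    mul_one] at h1
  have hf : (n.factorial : ℚ) ≠ 0 := by positivity
  have hn1 : ((n : ℚ) + 1) ≠ 0 := by positivity
  rw [eq_div_iff hn1]
  apply mul_left_cancel₀ hf
  linear_combination -h1

private theorem chNegOne (k : ℕ) : Ring.choose (-1 : ℚ) k = (-1) ^ k := by
  induction k with
  | zero => simp
  | succ n ih =>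
    have hn1 : ((n : ℚ) + 1) ≠ 0 := by positivity
    rw [ratioQ, ih, div_eq_iff hn1]
    ring

private theorem chNegThree (k : ℕ) :
    Ring.choose (-3 : ℚ) k = (-1) ^ k * (k + 1) * (k + 2) / 2 := by
  induction k with
  | zero => norm_num
  | succ n ih =>
    have hn1 : ((n : ℚ) + 1) ≠ 0 := by positivity
    rw [ratioQ, ih]
    push_cast
    field_simp
    ring

private theorem hrec (i : ℕ) :
    ((i : ℚ) + 1) * ((2 * (i + 1)).choose (i + 1) : ℚ) = 2 * (2 * i + 1) * ((2 * i).choose i : ℚ) := by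
  have h := Nat.succ_mul_centralBinom_succ i
  unfold Nat.centralBinom at h
  exact_mod_cast h

private theorem chHalf (k : ℕ) :
    Ring.choose (-1 / 2 : ℚ) k = ((2 * k).choose k : ℚ) / (-4) ^ k := by
  induction k with
  | zero => norm_num
  | succ n ih =>
    have hn1 : ((n : ℚ) + 1) ≠ 0 := by positivity
    have h4 : ((-4 : ℚ)) ^ n ≠ 0 := pow_ne_zero _ (by norm_num)
    rw [ratioQ, ih]
    have h := hrec n
    field_simp
    linear_combination (-2 * (-4 : ℚ) ^ n) * h

private theorem chThreeHalf (k : ℕ) :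
    Ring.choose (-3 / 2 : ℚ) k = (2 * k + 1) * ((2 * k).choose k : ℚ) / (-4) ^ k := by
  induction k with
  | zero => norm_num
  | succ n ih =>
    have hn1 : ((n : ℚ) + 1) ≠ 0 := by positivity
    have h4 : ((-4 : ℚ)) ^ n ≠ 0 := pow_ne_zero _ (by norm_num)
    rw [ratioQ, ih]
    have h := hrec n
    field_simp
    push_cast
    linear_combination (-2 * (2 * (n : ℚ) + 3) * (-4 : ℚ) ^ n) * h

private theorem vdm (r s : ℚ) (k : ℕ) :
    ∑ j ∈ range (k + 1), Ring.choose r j * Ring.choose s (k - j) = Ring.choose (r + s) k := by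
  rw [Ring.add_choose_eq k (Commute.all r s), Finset.Nat.sum_antidiagonal_eq_sum_range_succ_mk]

private theorem convA (k : ℕ) :
    ∑ j ∈ range (k + 1), (((2 * j).choose j : ℚ) * ((2 * (k - j)).choose (k - j) : ℚ)) = 4 ^ k := by
  have h : ∀ j ∈ range (k + 1),
      (((2 * j).choose j : ℚ) * ((2 * (k - j)).choose (k - j) : ℚ))
        = (-4) ^ k * (Ring.choose (-1 / 2 : ℚ) j * Ring.choose (-1 / 2 : ℚ) (k - j)) := by
    intro j hj
    have hjk : j ≤ k := Nat.lt_succ_iff.mp (mem_range.mp hj)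
    have hpow : ((-4 : ℚ)) ^ j * ((-4 : ℚ)) ^ (k - j) = (-4) ^ k := by
      rw [← pow_add, Nat.add_sub_cancel' hjk]
    have h4j : ((-4 : ℚ)) ^ j ≠ 0 := pow_ne_zero _ (by norm_num)
    have h4kj : ((-4 : ℚ)) ^ (k - j) ≠ 0 := pow_ne_zero _ (by norm_num)
    rw [chHalf, chHalf]
    field_simp
    linear_combination (((2 * j).choose j : ℚ) * ((2 * (k - j)).choose (k - j) : ℚ)) * hpow
  rw [Finset.sum_congr rfl h, ← mul_sum, vdm, show (-1 / 2 : ℚ) + (-1 / 2) = -1 by norm_num,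
    chNegOne, ← mul_pow]
  norm_num

private theorem termEq (m i : ℕ) (hi : i ≤ m) :
    ((i + 1 : ℕ) : ℚ) * ((m + 1 - i : ℕ) : ℚ) * ((2 * (i + 1)).choose (i + 1) : ℚ)
        * ((2 * (m + 1 - i)).choose (m + 1 - i) : ℚ)
      = 4 * (-4) ^ m * (Ring.choose (-3 / 2 : ℚ) i * Ring.choose (-3 / 2 : ℚ) (m - i)) := by
  have hmi : m + 1 - i = (m - i) + 1 := by omega
  rw [hmi, chThreeHalf, chThreeHalf]
  have h1 := hrec i
  have h2 := hrec (m - i)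
  have hpow : ((-4 : ℚ)) ^ i * ((-4 : ℚ)) ^ (m - i) = (-4) ^ m := by
    rw [← pow_add, Nat.add_sub_cancel' hi]
  have h4i : ((-4 : ℚ)) ^ i ≠ 0 := pow_ne_zero _ (by norm_num)
  have h4mi : ((-4 : ℚ)) ^ (m - i) ≠ 0 := pow_ne_zero _ (by norm_num)
  have hc : ((m - i : ℕ) : ℚ) = (m : ℚ) - i := by
    push_cast [hi]; ring
  rw [hc] at h2
  push_cast
  field_simp
  have h12 := congrArg₂ (· * ·) h1 h2
  rw [hc]
  linear_combination ((-4 : ℚ) ^ i * (-4 : ℚ) ^ (m - i)) * h12 +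
    (4 * (2 * (i : ℚ) + 1) * (2 * ((m : ℚ) - i) + 1) * ((2 * i).choose i : ℚ) *
      ((2 * (m - i)).choose (m - i) : ℚ)) * hpow

private theorem convD (k : ℕ) :
    ∑ j ∈ range (k + 1),
        (j : ℚ) * ((k - j : ℕ) : ℚ) * ((2 * j).choose j : ℚ) * ((2 * (k - j)).choose (k - j) : ℚ)
      = 4 ^ k * k * (k - 1) / 8 := by
  match k with
  | 0 => norm_num
  | 1 => simp [Finset.sum_range_succ]
  | (m + 2) =>
    rw [Finset.sum_range_succ, Finset.sum_range_succ']
    have hlast : (m + 2 - (m + 2) : ℕ) = 0 := by omega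
    have h : ∀ i ∈ range (m + 1),
        ((i + 1 : ℕ) : ℚ) * ((m + 2 - (i + 1) : ℕ) : ℚ) * ((2 * (i + 1)).choose (i + 1) : ℚ)
            * ((2 * (m + 2 - (i + 1))).choose (m + 2 - (i + 1)) : ℚ)
          = 4 * (-4) ^ m * (Ring.choose (-3 / 2 : ℚ) i * Ring.choose (-3 / 2 : ℚ) (m - i)) := by
      intro i hi
      have hi' : i ≤ m := Nat.lt_succ_iff.mp (mem_range.mp hi)
      have : m + 2 - (i + 1) = m + 1 - i := by omega
      rw [this]
      exact termEq m i hi'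
    rw [Finset.sum_congr rfl h, ← mul_sum, vdm, show (-3 / 2 : ℚ) + (-3 / 2) = -3 by norm_num,
      chNegThree]
    have hmm : ((-4 : ℚ)) ^ m * (-1) ^ m = 4 ^ m := by rw [← mul_pow]; norm_num
    simp only [Nat.sub_self, Nat.cast_zero, zero_mul, mul_zero, add_zero, Nat.cast_ofNat]
    push_cast
    linear_combination (2 * ((m : ℚ) + 1) * ((m : ℚ) + 2)) * hmm

private theorem inner (k : ℕ) :
    ∑ j ∈ Finset.range (k + 1),
        ((2 * j).choose j : ℚ) * (2 * (k - j)).choose (k - j) * (6 * j + 1) * (6 * (k - j : ℕ) + 1)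
      = 4 ^ k * (9 * k ^ 2 + 3 * k + 2) / 2 := by
  have hsplit : ∀ j ∈ range (k + 1),
      ((2 * j).choose j : ℚ) * (2 * (k - j)).choose (k - j) * (6 * j + 1) * (6 * (k - j : ℕ) + 1)
        = 36 * ((j : ℚ) * ((k - j : ℕ) : ℚ) * ((2 * j).choose j : ℚ)
            * ((2 * (k - j)).choose (k - j) : ℚ))
          + (6 * (k : ℚ) + 1) * (((2 * j).choose j : ℚ) * ((2 * (k - j)).choose (k - j) : ℚ)) := by
    intro j hj
    have hjk : j ≤ k := Nat.lt_succ_iff.mp (mem_range.mp hj)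
    have hjt : (j : ℚ) + ((k - j : ℕ) : ℚ) = (k : ℚ) := by
      have := Nat.add_sub_cancel' hjk
      exact_mod_cast congrArg (Nat.cast (R := ℚ)) this
    linear_combination (6 * ((2 * j).choose j : ℚ) * ((2 * (k - j)).choose (k - j) : ℚ)) * hjt
  rw [Finset.sum_congr rfl hsplit, Finset.sum_add_distrib, ← mul_sum, ← mul_sum, convD, convA]
  ring

private theorem outer (n : ℕ) :
    ∑ k ∈ Finset.range n, (-1 / 8 : ℚ) ^ k * (4 ^ k * (9 * k ^ 2 + 3 * k + 2) / 2)
      = -(-1 / 2 : ℚ) ^ n * n * (3 * n - 1) := by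
  induction n with
  | zero => simp
  | succ m ih =>
    rw [Finset.sum_range_succ, ih, pow_succ]
    have h : (-1 / 8 : ℚ) ^ m * 4 ^ m = (-1 / 2 : ℚ) ^ m := by
      rw [← mul_pow]; norm_num
    push_cast
    linear_combination ((9 * (m : ℚ) ^ 2 + 3 * m + 2) / 2) * h

theorem stmt_5 (p : ℕ) (hp : p.Prime) (hodd : Odd p) :
    Nat.Coprime
      ((((∑ k ∈ Finset.range p, (-1 / 8 : ℚ) ^ k *
        ∑ j ∈ Finset.range (k + 1),
          ((2 * j).choose j : ℚ) * (2 * (k - j)).choose (k - j) * (6 * j + 1) * (6 * (k - j : ℕ) + 1))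
        + p / 2) / p ^ 2 : ℚ).den) p := by
  have hp2 : p ≠ 2 := by
    rintro rfl
    exact (Nat.not_odd_iff_even.mpr even_two) hodd
  have hpd2 : ¬ p ∣ 2 := by
    intro hd
    exact hp2 ((Nat.prime_dvd_prime_iff_eq hp Nat.prime_two).mp hd)
  have hcop : Nat.Coprime 2 p := (Nat.Prime.coprime_iff_not_dvd hp |>.mpr hpd2).symm
  have hfermat : 2 ^ (p - 1) ≡ 1 [MOD p] := by
    have := Nat.ModEq.pow_totient hcop
    rwa [Nat.totient_prime hp] at this
  have h1le : 1 ≤ 2 ^ (p - 1) := Nat.one_le_two_pow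
  have hdvd : p ∣ 2 ^ (p - 1) - 1 := (Nat.modEq_iff_dvd' h1le).mp hfermat.symm
  obtain ⟨c, hc⟩ := hdvd
  have hc2 : 2 ^ (p - 1) = p * c + 1 := by omega
  have hsum : (∑ k ∈ Finset.range p, (-1 / 8 : ℚ) ^ k *
        ∑ j ∈ Finset.range (k + 1),
          ((2 * j).choose j : ℚ) * (2 * (k - j)).choose (k - j) * (6 * j + 1) * (6 * (k - j : ℕ) + 1))
      = -(-1 / 2 : ℚ) ^ p * p * (3 * p - 1) := by
    rw [← outer p]
    exact Finset.sum_congr rfl fun k _ => by rw [inner k]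
  have hkey : ((((∑ k ∈ Finset.range p, (-1 / 8 : ℚ) ^ k *
        ∑ j ∈ Finset.range (k + 1),
          ((2 * j).choose j : ℚ) * (2 * (k - j)).choose (k - j) * (6 * j + 1) * (6 * (k - j : ℕ) + 1))
        + p / 2) / p ^ 2 : ℚ)) = ((3 + c : ℤ) : ℚ) / ((2 ^ p : ℤ) : ℚ) := by
    rw [hsum]
    have hpq : (p : ℚ) ≠ 0 := Nat.cast_ne_zero.mpr hp.pos.ne'
    have h2q : (2 : ℚ) ^ p ≠ 0 := pow_ne_zero _ (by norm_num)
    have hneg : (-1 / 2 : ℚ) ^ p = -(1 / 2 : ℚ) ^ p := by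
      rw [show (-1 / 2 : ℚ) = -(1 / 2) by norm_num, hodd.neg_pow]
    have hps : p - 1 + 1 = p := Nat.succ_pred_eq_of_pos hp.pos
    have hsplit2 : (2 : ℚ) ^ p = 2 * 2 ^ (p - 1) := by
      conv_lhs => rw [← hps, pow_succ]
      ring
    have hcq : (2 : ℚ) ^ (p - 1) = p * c + 1 := by
      exact_mod_cast congrArg (Nat.cast (R := ℚ)) hc2
    have hhalf : (1 / 2 : ℚ) ^ p = 1 / (2 * ((p : ℚ) * c + 1)) := by
      rw [div_pow, one_pow, hsplit2, hcq]
    rw [hneg, hhalf]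
    push_cast
    rw [div_eq_div_iff (by positivity) (by positivity : (2:ℚ) ^ p ≠ 0)]
    rw [hsplit2, hcq]
    have hpc1 : (2 : ℚ) * ((p : ℚ) * c + 1) ≠ 0 := by positivity
    field_simp
    ring
  rw [hkey]
  have hden : ((((3 + c : ℤ) : ℚ) / ((2 ^ p : ℤ) : ℚ)).den : ℤ) ∣ (2 ^ p : ℤ) := by
    rw [← Rat.divInt_eq_div]
    exact Rat.den_dvd _ _
  have hden' : (((3 + c : ℤ) : ℚ) / ((2 ^ p : ℤ) : ℚ)).den ∣ 2 ^ p := by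
    exact_mod_cast hden
  exact Nat.Coprime.coprime_dvd_left hden' (Nat.Coprime.pow_left p hcop)
end

section
/- For every odd prime p, the sum over k from 0 to p-1 of (1/4)^k * (sum over j from 0 to k of binom(2j,j)*binom(2k-2j,k-j)*(6j+1)*(6k-6j+1)) is congruent to p modulo p^2. -/
open Finset

/-- central binomial coefficient as a rational -/
def bq (n : ℕ) : ℚ := ((2*n).choose n : ℚ)

lemma bq_zero : bq 0 = 1 := by simp [bq]

lemma bq_rec (n : ℕ) : ((n:ℚ)+1) * bq (n+1) = (2*(2*(n:ℚ)+1)) * bq n := by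
  have h := Nat.succ_mul_centralBinom_succ n
  simp only [Nat.centralBinom] at h
  have := congrArg (fun m : ℕ => (m : ℚ)) h
  push_cast at this
  simpa [bq] using this

lemma bq_cat (n : ℕ) : bq n = ((n:ℚ)+1) * (catalan n : ℚ) := by
  have h := succ_mul_catalan_eq_centralBinom n
  simp only [Nat.centralBinom] at h
  have := congrArg (fun m : ℕ => (m : ℚ)) h
  push_cast at this
  simpa [bq] using this.symm

/-- triangle swap -/
lemma tri_swap (n : ℕ) (f : ℕ → ℕ → ℚ) :
    ∑ j ∈ range n, ∑ i ∈ range (n - j), f j i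
      = ∑ i ∈ range n, ∑ j ∈ range (n - i), f j i := by
  rw [← Finset.sum_range_diag_flip n f]
  rw [← Finset.sum_range_diag_flip n (fun a b => f b a)]
  refine Finset.sum_congr rfl fun m hm => ?_
  have := Finset.sum_range_reflect (fun k => f k (m - k)) (m+1)
  rw [← this]
  refine Finset.sum_congr rfl fun k hk => ?_
  simp only [mem_range, Nat.lt_succ_iff] at hk
  congr 1 <;> omega

/-- star: b_{n+1} = 2 * sum cat_j b_{n-j} -/
lemma bq_star (n : ℕ) : bq (n+1) = 2 * ∑ j ∈ range (n+1), (catalan j : ℚ) * bq (n - j) := by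
  have hc : (catalan (n+1) : ℚ) = ∑ j ∈ range (n+1), (catalan j : ℚ) * (catalan (n-j) : ℚ) := by
    have := catalan_succ' n
    rw [Nat.sum_antidiagonal_eq_sum_range_succ (fun x y => catalan x * catalan y) n] at this
    exact_mod_cast congrArg (fun m : ℕ => (m : ℚ)) this
  have hrefl : ∑ j ∈ range (n+1), (catalan j : ℚ) * (((n:ℚ)-j+1) * (catalan (n-j):ℚ))
      = ∑ j ∈ range (n+1), (catalan (n-j) : ℚ) * (((j:ℚ)+1) * (catalan j:ℚ)) := by
    have := Finset.sum_range_reflect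
      (fun j => (catalan j : ℚ) * (((n:ℚ)-j+1) * (catalan (n-j):ℚ))) (n+1)
    rw [← this]
    refine Finset.sum_congr rfl fun j hj => ?_
    simp only [mem_range, Nat.lt_succ_iff] at hj
    have h1 : n + 1 - 1 - j = n - j := by omega
    have h2 : n - (n - j) = j := by omega
    have h3 : ((n - j : ℕ) : ℚ) = (n:ℚ) - j := by
      have : ((n - j : ℕ) : ℚ) = ((n:ℕ):ℚ) - ((j:ℕ):ℚ) := by
        push_cast [Nat.cast_sub hj]; ring
      simpa using this
    rw [h1, h2, h3]
    ring
  calc bq (n+1) = ((n:ℚ)+2) * (catalan (n+1) : ℚ) := by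
        rw [bq_cat (n+1)]; push_cast; ring
    _ = ∑ j ∈ range (n+1), ((n:ℚ)+2) * ((catalan j : ℚ) * (catalan (n-j) : ℚ)) := by
        rw [hc, Finset.mul_sum]
    _ = 2 * ∑ j ∈ range (n+1), (catalan j : ℚ) * bq (n - j) := by
        rw [Finset.mul_sum]
        have expand : ∀ j ∈ range (n+1),
            ((n:ℚ)+2) * ((catalan j : ℚ) * (catalan (n-j) : ℚ))
            = (catalan j : ℚ) * (((n:ℚ)-j+1) * (catalan (n-j):ℚ))
              + (catalan (n-j) : ℚ) * (((j:ℚ)+1) * (catalan j:ℚ)) := by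
          intro j hj; ring
        have step : ∑ j ∈ range (n+1), ((n:ℚ)+2) * ((catalan j : ℚ) * (catalan (n-j) : ℚ))
            = (∑ j ∈ range (n+1), (catalan j : ℚ) * (((n:ℚ)-j+1) * (catalan (n-j):ℚ)))
              + ∑ j ∈ range (n+1), (catalan (n-j) : ℚ) * (((j:ℚ)+1) * (catalan j:ℚ)) := by
          exact (Finset.sum_congr rfl expand).trans Finset.sum_add_distrib
        have fin : ∀ j ∈ range (n+1),
            (catalan j : ℚ) * (((n:ℚ)-j+1) * (catalan (n-j):ℚ)) = (catalan j:ℚ) * bq (n-j) := by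
          intro j hj
          simp only [mem_range, Nat.lt_succ_iff] at hj
          rw [bq_cat (n-j)]
          have h3 : ((n - j : ℕ) : ℚ) = (n:ℚ) - j := by
            push_cast [Nat.cast_sub hj]; ring
          rw [h3]
        rw [step, ← hrefl, ← two_mul, Finset.sum_congr rfl fin, Finset.mul_sum]

lemma cast_sub_q {n j : ℕ} (h : j ≤ n) : ((n - j : ℕ) : ℚ) = (n:ℚ) - j := by
  push_cast [Nat.cast_sub h]; ring

lemma bq_succ (n : ℕ) : bq (n+1) = 4 * bq n - 2 * (catalan n : ℚ) := by
  have h1 := bq_rec n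
  have h2 := bq_cat n
  have hne : ((n:ℚ)+1) ≠ 0 := by positivity
  field_simp at h2 ⊢
  nlinarith [h1, h2]

lemma catsum (n : ℕ) : 2 * ∑ i ∈ range n, (catalan i : ℚ) * 4^(n-1-i) = 4^n - bq n := by
  induction n with
  | zero => simp [bq_zero]
  | succ n ih =>
    rw [Finset.sum_range_succ]
    have hpow : ∀ i ∈ range n, (catalan i : ℚ) * 4^(n+1-1-i) = 4 * ((catalan i:ℚ) * 4^(n-1-i)) := by
      intro i hi
      simp only [mem_range] at hi
      have : n+1-1-i = (n-1-i)+1 := by omega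
      rw [this]; ring
    rw [Finset.sum_congr rfl hpow, ← Finset.mul_sum]
    have : n+1-1-n = 0 := by omega
    rw [this]
    rw [bq_succ n]
    have hp : (4:ℚ)^(n+1) = 4*4^n := by ring
    rw [hp]
    linarith [ih]

lemma conv (n : ℕ) : ∑ j ∈ range (n+1), bq j * bq (n-j) = 4^n := by
  induction n using Nat.strong_induction_on with
  | _ n ih =>
    match n with
    | 0 => simp [bq_zero]
    | (m+1) =>
      rw [Finset.sum_range_succ]
      have hlast : bq (m+1) * bq (m+1-(m+1)) = bq (m+1) := by
        simp [bq_zero]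
      have hmain : ∑ j ∈ range (m+1), bq j * bq (m+1-j)
          = ∑ j ∈ range (m+1), ∑ i ∈ range (m+1-j), 2 * (bq j * ((catalan i : ℚ) * bq (m-j-i))) := by
        refine Finset.sum_congr rfl fun j hj => ?_
        simp only [mem_range, Nat.lt_succ_iff] at hj
        have h1 : m+1-j = (m-j)+1 := by omega
        rw [h1, bq_star (m-j), Finset.mul_sum, Finset.mul_sum]
        refine Finset.sum_congr rfl fun i hi => ?_
        have : m - j - i = m - i - j := by omega
        rw [this]; ring
      have hswap := tri_swap (m+1) (fun j i => 2 * (bq j * ((catalan i : ℚ) * bq (m-j-i))))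
      rw [hmain, hswap]
      have hinner : ∀ i ∈ range (m+1),
          ∑ j ∈ range (m+1-i), 2 * (bq j * ((catalan i : ℚ) * bq (m-j-i)))
            = 2 * ((catalan i : ℚ) * 4^(m-i)) := by
        intro i hi
        simp only [mem_range, Nat.lt_succ_iff] at hi
        have h1 : m+1-i = (m-i)+1 := by omega
        rw [h1]
        rw [show (2:ℚ) * ((catalan i : ℚ) * 4^(m-i)) = 2 * ((catalan i:ℚ) * ∑ j ∈ range ((m-i)+1), bq j * bq ((m-i)-j)) by rw [ih (m-i) (by omega)]]
        rw [Finset.mul_sum, Finset.mul_sum]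
        refine Finset.sum_congr rfl fun j hj => ?_
        have : m - j - i = m - i - j := by omega
        rw [this]; ring
      rw [Finset.sum_congr rfl hinner]
      have := catsum (m+1)
      have hexp : ∑ i ∈ range (m+1), 2 * ((catalan i:ℚ) * 4^(m-i))
          = 2 * ∑ i ∈ range (m+1), (catalan i:ℚ) * 4^(m+1-1-i) := by
        rw [Finset.mul_sum]
        refine Finset.sum_congr rfl fun i hi => ?_
        have : m+1-1-i = m-i := by omega
        rw [this]
      rw [hexp, hlast, this]
      ring

lemma esum (n : ℕ) : (n:ℚ) * bq n = 2 * ∑ i ∈ range n, bq i * 4^(n-1-i) := by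
  induction n with
  | zero => simp
  | succ n ih =>
    rw [Finset.sum_range_succ]
    have hpow : ∀ i ∈ range n, bq i * 4^(n+1-1-i) = 4 * (bq i * 4^(n-1-i)) := by
      intro i hi
      simp only [mem_range] at hi
      have : n+1-1-i = (n-1-i)+1 := by omega
      rw [this]; ring
    rw [Finset.sum_congr rfl hpow, ← Finset.mul_sum]
    have h0 : n+1-1-n = 0 := by omega
    rw [h0]
    have := bq_rec n
    push_cast
    nlinarith [ih, this]

lemma vsum (n : ℕ) : 3 * ∑ j ∈ range (n+1), (4:ℚ)^(n-j) * ((j:ℚ) * bq j) = (n:ℚ)*(2*(n:ℚ)+1) * bq n := by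
  induction n with
  | zero => simp
  | succ n ih =>
    rw [Finset.sum_range_succ]
    have hpow : ∀ j ∈ range (n+1), (4:ℚ)^(n+1-j) * ((j:ℚ) * bq j) = 4 * ((4:ℚ)^(n-j) * ((j:ℚ) * bq j)) := by
      intro j hj
      simp only [mem_range, Nat.lt_succ_iff] at hj
      have : n+1-j = (n-j)+1 := by omega
      rw [this]; ring
    rw [Finset.sum_congr rfl hpow, ← Finset.mul_sum]
    have hsub : n+1-(n+1) = 0 := by omega
    rw [hsub]
    have := bq_rec n
    push_cast
    nlinarith [ih, this]

lemma bsum (m : ℕ) : 2 * ∑ j ∈ range (m+1), (j:ℚ) * (bq j * bq (m-j)) = (m:ℚ) * 4^m := by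
  have hrefl : ∑ j ∈ range (m+1), ((m - j : ℕ):ℚ) * (bq (m-j) * bq j)
      = ∑ j ∈ range (m+1), (j:ℚ) * (bq j * bq (m-j)) := by
    have := Finset.sum_range_reflect (fun j => ((j:ℕ):ℚ) * (bq j * bq (m-j))) (m+1)
    rw [← this]
    refine Finset.sum_congr rfl fun j hj => ?_
    simp only [mem_range, Nat.lt_succ_iff] at hj
    have h1 : m + 1 - 1 - j = m - j := by omega
    have h2 : m - (m - j) = j := by omega
    rw [h1, h2]
  have hsum : (2:ℚ) * ∑ j ∈ range (m+1), (j:ℚ) * (bq j * bq (m-j))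
      = ∑ j ∈ range (m+1), (m:ℚ) * (bq j * bq (m-j)) := by
    rw [two_mul]
    nth_rewrite 1 [← hrefl]
    rw [← Finset.sum_add_distrib]
    refine Finset.sum_congr rfl fun j hj => ?_
    simp only [mem_range, Nat.lt_succ_iff] at hj
    rw [cast_sub_q hj]
    ring
  rw [hsum, ← Finset.mul_sum, conv m]

lemma bsum' (m : ℕ) : 2 * ∑ j ∈ range (m+1), ((m - j : ℕ):ℚ) * (bq j * bq (m-j)) = (m:ℚ) * 4^m := by
  rw [← bsum m]
  congr 1
  have := Finset.sum_range_reflect (fun j => ((j:ℕ):ℚ) * (bq j * bq (m-j))) (m+1)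
  rw [← this]
  refine Finset.sum_congr rfl fun j hj => ?_
  simp only [mem_range, Nat.lt_succ_iff] at hj
  have h1 : m + 1 - 1 - j = m - j := by omega
  have h2 : m - (m - j) = j := by omega
  rw [h1, h2]
  ring

lemma tsumq (k : ℕ) : 8 * ∑ j ∈ range (k+1), ((j:ℚ) * ((k-j:ℕ):ℚ)) * (bq j * bq (k-j))
    = (k:ℚ)*((k:ℚ)-1)*4^k := by
  induction k with
  | zero => simp
  | succ m ih =>
    rw [Finset.sum_range_succ]
    have hlast : ((m+1:ℕ):ℚ) * (((m+1)-(m+1):ℕ):ℚ) * (bq (m+1) * bq ((m+1)-(m+1))) = 0 := by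
      simp
    have hmain : ∑ j ∈ range (m+1), ((j:ℚ) * (((m+1)-j:ℕ):ℚ)) * (bq j * bq ((m+1)-j))
        = ∑ j ∈ range (m+1), ∑ i ∈ range (m+1-j), 2*((j:ℚ)*bq j * (bq i * 4^(m-j-i))) := by
      refine Finset.sum_congr rfl fun j hj => ?_
      simp only [mem_range, Nat.lt_succ_iff] at hj
      have he := esum (m+1-j)
      have harr : ((j:ℚ) * (((m+1)-j:ℕ):ℚ)) * (bq j * bq ((m+1)-j))
          = (j:ℚ)*bq j * ((((m+1)-j:ℕ):ℚ) * bq ((m+1)-j)) := by ring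
      rw [harr, he, Finset.mul_sum, Finset.mul_sum]
      refine Finset.sum_congr rfl fun i hi => ?_
      have : m+1-j-1-i = m-j-i := by omega
      rw [this]; ring
    have hswap := tri_swap (m+1) (fun j i => 2*((j:ℚ)*bq j * (bq i * 4^(m-j-i))))
    have hinner : 3 * ∑ i ∈ range (m+1), ∑ j ∈ range (m+1-i), 2*((j:ℚ)*bq j * (bq i * 4^(m-j-i)))
        = ∑ i ∈ range (m+1), 2 * bq i * (((m-i:ℕ):ℚ)*(2*((m-i:ℕ):ℚ)+1) * bq (m-i)) := by
      rw [Finset.mul_sum]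
      refine Finset.sum_congr rfl fun i hi => ?_
      simp only [mem_range, Nat.lt_succ_iff] at hi
      have h1 : m+1-i = (m-i)+1 := by omega
      have hv := vsum (m-i)
      calc 3 * ∑ j ∈ range (m+1-i), 2*((j:ℚ)*bq j * (bq i * 4^(m-j-i)))
          = 2 * bq i * (3 * ∑ j ∈ range ((m-i)+1), (4:ℚ)^((m-i)-j) * ((j:ℚ) * bq j)) := by
            rw [h1, Finset.mul_sum, Finset.mul_sum, Finset.mul_sum]
            refine Finset.sum_congr rfl fun j hj => ?_
            have : m - j - i = m - i - j := by omega
            rw [this]; ring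
        _ = 2 * bq i * (((m-i:ℕ):ℚ)*(2*((m-i:ℕ):ℚ)+1) * bq (m-i)) := by rw [hv]
    have hweight : ∑ i ∈ range (m+1), 2 * bq i * (((m-i:ℕ):ℚ)*(2*((m-i:ℕ):ℚ)+1) * bq (m-i))
        = (4*(m:ℚ)+2) * ∑ i ∈ range (m+1), ((m-i:ℕ):ℚ) * (bq i * bq (m-i))
          - 4 * ∑ i ∈ range (m+1), ((i:ℚ) * ((m-i:ℕ):ℚ)) * (bq i * bq (m-i)) := by
      rw [Finset.mul_sum, Finset.mul_sum, ← Finset.sum_sub_distrib]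
      refine Finset.sum_congr rfl fun i hi => ?_
      simp only [mem_range, Nat.lt_succ_iff] at hi
      rw [cast_sub_q hi]
      ring
    have hb := bsum' m
    have key : 3 * ∑ j ∈ range (m+1), ((j:ℚ) * (((m+1)-j:ℕ):ℚ)) * (bq j * bq ((m+1)-j))
        = (4*(m:ℚ)+2) * ∑ i ∈ range (m+1), ((m-i:ℕ):ℚ) * (bq i * bq (m-i))
          - 4 * ∑ i ∈ range (m+1), ((i:ℚ) * ((m-i:ℕ):ℚ)) * (bq i * bq (m-i)) := by
      rw [hmain, hswap, hinner, hweight]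
    rw [hlast, add_zero]
    have hp : (4:ℚ)^(m+1) = 4*4^m := by ring
    push_cast
    rw [hp]
    linear_combination (8/3)*key + (8/3)*(2*(m:ℚ)+1)*hb - (4/3)*ih

lemma master (k : ℕ) : ∑ j ∈ range (k+1), bq j * bq (k-j) * (6*(j:ℚ)+1) * (6*((k-j:ℕ):ℚ)+1)
    = 4^k * (9*(k:ℚ)^2+3*(k:ℚ)+2)/2 := by
  have hexp : ∀ j ∈ range (k+1), bq j * bq (k-j) * (6*(j:ℚ)+1) * (6*((k-j:ℕ):ℚ)+1)
      = 36*(((j:ℚ) * ((k-j:ℕ):ℚ)) * (bq j * bq (k-j))) + (6*(k:ℚ)+1)*(bq j * bq (k-j)) := by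
    intro j hj
    simp only [mem_range, Nat.lt_succ_iff] at hj
    rw [cast_sub_q hj]
    ring
  rw [Finset.sum_congr rfl hexp, Finset.sum_add_distrib, ← Finset.mul_sum, ← Finset.mul_sum]
  have ht := tsumq k
  have hc := conv k
  linear_combination (9/2)*ht + (6*(k:ℚ)+1)*hc

lemma sumpoly (n : ℕ) : ∑ k ∈ range n, (9*(k:ℚ)^2+3*(k:ℚ)+2)/2
    = (n:ℚ)*(3*(n:ℚ)^2-3*(n:ℚ)+2)/2 := by
  induction n with
  | zero => simp
  | succ n ih => rw [Finset.sum_range_succ, ih]; push_cast; ring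

theorem stmt_6 (p : ℕ) (hp : p.Prime) (hodd : Odd p) :
    Nat.Coprime
      ((((∑ k ∈ Finset.range p, (1 / 4 : ℚ) ^ k *
        ∑ j ∈ Finset.range (k + 1),
          ((2 * j).choose j : ℚ) * (2 * (k - j)).choose (k - j) * (6 * j + 1) * (6 * (k - j : ℕ) + 1))
        - p) / p ^ 2 : ℚ).den) p := by
  have hterm : ∀ k ∈ Finset.range p, (1 / 4 : ℚ) ^ k *
        ∑ j ∈ Finset.range (k + 1),
          ((2 * j).choose j : ℚ) * (2 * (k - j)).choose (k - j) * (6 * j + 1) * (6 * (k - j : ℕ) + 1)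
      = (9*(k:ℚ)^2+3*(k:ℚ)+2)/2 := by
    intro k _
    have hm := master k
    simp only [bq] at hm
    rw [hm, show (1/4:ℚ)^k * (4^k * (9*(k:ℚ)^2+3*(k:ℚ)+2)/2)
        = ((1/4:ℚ)*4)^k * ((9*(k:ℚ)^2+3*(k:ℚ)+2)/2) by rw [mul_pow]; ring]
    norm_num
  rw [Finset.sum_congr rfl hterm, sumpoly p]
  obtain ⟨m, hm⟩ := hodd
  have hp0 : (p:ℚ) ≠ 0 := Nat.cast_ne_zero.2 hp.pos.ne'
  have hval : ((p:ℚ)*(3*(p:ℚ)^2-3*(p:ℚ)+2)/2 - (p:ℚ))/(p:ℚ)^2 = ((3*m : ℕ) : ℚ) := by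
    subst hm
    have h0 : ((2*m+1 : ℕ):ℚ) ≠ 0 := hp0
    push_cast at h0 ⊢
    field_simp
    ring
  rw [hval, Rat.den_natCast]
  exact Nat.coprime_one_left p
end

section
/- For every odd prime p, the integer sum over k from 0 to p-1 of (-1)^k * 2^(3(p-1-k)) * (sum over j from 0 to k of binom(2j,j)*binom(2k-2j,k-j)*(6j+1)*(6k-6j+1)) is divisible by p. -/
open Finset

private def aa (j : ℕ) : ℤ := ((2 * j).choose j : ℤ)

private lemma aa_rec (j : ℕ) : ((j : ℤ) + 1) * aa (j + 1) = 2 * (2 * j + 1) * aa j := by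
  have h := Nat.succ_mul_centralBinom_succ j
  simp only [Nat.centralBinom] at h
  have h2 := congrArg (Nat.cast : ℕ → ℤ) h
  push_cast at h2
  unfold aa
  linarith [h2]

private lemma aa_zero : aa 0 = 1 := by simp [aa]

private lemma reflect (k : ℕ) (w : ℕ → ℤ) :
    ∑ j ∈ range (k+1), w j * (aa j * aa (k - j))
    = ∑ j ∈ range (k+1), w (k - j) * (aa (k - j) * aa j) := by
  rw [← Finset.sum_range_reflect]
  apply Finset.sum_congr rfl
  intro j hj
  have hj' : j ≤ k := by simpa [Nat.lt_succ_iff] using hj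
  have h1 : k + 1 - 1 - j = k - j := by omega
  have h2 : k - (k - j) = j := by omega
  rw [h1, h2]

private def SA (k : ℕ) : ℤ := ∑ j ∈ range (k+1), aa j * aa (k - j)
private def SB (k : ℕ) : ℤ := ∑ j ∈ range (k+1), (j : ℤ) * (aa j * aa (k - j))
private def SC (k : ℕ) : ℤ := ∑ j ∈ range (k+1), (j : ℤ) * ((k : ℤ) - j) * (aa j * aa (k - j))
private def SD (k : ℕ) : ℤ :=
  ∑ j ∈ range (k+1), (2 * (j : ℤ) + 1) * (2 * ((k : ℤ) - j) + 1) * (aa j * aa (k - j))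

private lemma L1 (k : ℕ) : 2 * SB k = (k : ℤ) * SA k := by
  have hr := reflect k (fun j => (j : ℤ))
  have : 2 * SB k = SB k + ∑ j ∈ range (k+1), ((k - j : ℕ) : ℤ) * (aa (k - j) * aa j) := by
    rw [← hr]; unfold SB; ring
  rw [this]
  unfold SB SA
  rw [← Finset.sum_add_distrib, Finset.mul_sum]
  apply Finset.sum_congr rfl
  intro j hj
  have hj' : j ≤ k := by simpa [Nat.lt_succ_iff] using hj
  rw [Nat.cast_sub hj']
  ring

private lemma L2 (k : ℕ) : ((k : ℤ) + 1) * SA (k + 1) = 4 * (2 * SB k + SA k) := by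
  -- (k+1) * SA (k+1) = 2 * ∑_{j∈range(k+2)} j * (aa j * aa (k+1-j))
  have key : ((k : ℤ) + 1) * SA (k + 1)
      = 2 * ∑ j ∈ range (k+2), (j : ℤ) * (aa j * aa (k + 1 - j)) := by
    have hr := reflect (k+1) (fun j => (j : ℤ))
    unfold SA
    rw [Finset.mul_sum, two_mul]
    nth_rewrite 2 [hr]
    rw [← Finset.sum_add_distrib]
    apply Finset.sum_congr rfl
    intro j hj
    have hj' : j ≤ k + 1 := by simpa [Nat.lt_succ_iff] using hj
    rw [Nat.cast_sub hj']
    push_cast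
    ring
  rw [key, Finset.sum_range_succ']
  simp only [Nat.cast_zero, zero_mul, add_zero]
  have step : ∀ i ∈ range (k+1),
      ((i : ℤ) + 1) * (aa (i+1) * aa (k + 1 - (i+1))) = 2 * (2 * i + 1) * (aa i * aa (k - i)) := by
    intro i hi
    have h1 : k + 1 - (i + 1) = k - i := by omega
    rw [h1, show ((i:ℤ)+1) * (aa (i+1) * aa (k-i)) = (((i:ℤ)+1) * aa (i+1)) * aa (k-i) by ring,
      aa_rec]
    ring
  have this2 : ∑ x ∈ range (k+1), ((x : ℤ) + 1) * (aa (x+1) * aa (k - x))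
      = ∑ x ∈ range (k+1), 2 * (2 * (x:ℤ) + 1) * (aa x * aa (k - x)) := by
    apply Finset.sum_congr rfl
    intro i hi
    have h1 : k + 1 - (i + 1) = k - i := by omega
    have := step i hi
    rw [h1] at this
    exact this
  push_cast
  rw [this2]
  have expand : 2 * ∑ x ∈ range (k+1), 2 * (2 * (x:ℤ) + 1) * (aa x * aa (k - x))
      = ∑ x ∈ range (k+1), (8 * ((x:ℤ) * (aa x * aa (k - x))) + 4 * (aa x * aa (k - x))) := by
    rw [Finset.mul_sum]
    apply Finset.sum_congr rfl
    intro x _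
    ring
  rw [expand, Finset.sum_add_distrib, ← Finset.mul_sum, ← Finset.mul_sum]
  unfold SB SA
  ring

private lemma L3 (k : ℕ) : SA k = 4 ^ k := by
  induction k with
  | zero => simp [SA, aa_zero]
  | succ n ih =>
    have h := L2 n
    rw [L1, ih] at h
    have h2 : ((n : ℤ) + 1) * SA (n+1) = ((n:ℤ)+1) * (4 * 4 ^ n) := by rw [h]; ring
    have hne : ((n : ℤ) + 1) ≠ 0 := by positivity
    have := mul_left_cancel₀ hne h2
    rw [this]; ring

private lemma L4 (k : ℕ) : SD k = 4 * SC k + (2 * (k:ℤ) + 1) * SA k := by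
  have expand : SD k = ∑ j ∈ range (k+1),
      (4 * ((j:ℤ) * ((k:ℤ) - j) * (aa j * aa (k - j))) + (2*(k:ℤ)+1) * (aa j * aa (k - j))) := by
    unfold SD
    apply Finset.sum_congr rfl
    intro j _
    ring
  rw [expand, Finset.sum_add_distrib, ← Finset.mul_sum, ← Finset.mul_sum]
  unfold SC SA
  ring

private lemma L5 (k : ℕ) : SC (k + 2) = 4 * SD k := by
  unfold SC
  rw [Finset.sum_range_succ, Finset.sum_range_succ']
  have hlast : ((k:ℤ) + 2) * (((k:ℕ)+2 : ℤ) - ((k:ℕ)+2 : ℤ)) = 0 := by ring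
  push_cast
  have step : ∀ i ∈ range (k+1),
      ((i:ℤ) + 1) * (((k:ℤ) + 2) - ((i:ℤ) + 1)) * (aa (i+1) * aa (k + 1 - i))
      = 4 * ((2 * (i:ℤ) + 1) * (2 * ((k:ℤ) - i) + 1) * (aa i * aa (k - i))) := by
    intro i hi
    have hi' : i ≤ k := by simpa [Nat.lt_succ_iff] using hi
    have h1 : k + 1 - i = (k - i) + 1 := by omega
    have r1 := aa_rec i
    have r2 := aa_rec (k - i)
    have hc : ((k - i : ℕ) : ℤ) = (k : ℤ) - i := by
      rw [Nat.cast_sub hi']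
    rw [h1]
    rw [hc] at r2
    calc ((i:ℤ) + 1) * (((k:ℤ) + 2) - ((i:ℤ) + 1)) * (aa (i+1) * aa ((k - i) + 1))
        = (((i:ℤ)+1) * aa (i+1)) * ((((k:ℤ) - i) + 1) * aa ((k-i)+1)) := by ring
      _ = (2 * (2*(i:ℤ)+1) * aa i) * (2 * (2*((k:ℤ)-i)+1) * aa (k-i)) := by rw [r1, r2]
      _ = 4 * ((2 * (i:ℤ) + 1) * (2 * ((k:ℤ) - i) + 1) * (aa i * aa (k - i))) := by ring
  rw [Finset.sum_congr rfl step]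
  simp only [zero_mul, sub_self, mul_zero, add_zero]
  rw [← Finset.mul_sum]
  unfold SD
  ring

private lemma L6 (k : ℕ) : 8 * SC k = (k:ℤ) * ((k:ℤ) - 1) * 4 ^ k := by
  have key : ∀ n : ℕ, (8 * SC n = (n:ℤ) * ((n:ℤ) - 1) * 4 ^ n) ∧
      (8 * SC (n+1) = ((n:ℤ)+1) * (n:ℤ) * 4 ^ (n+1)) := by
    intro n
    induction n with
    | zero =>
      constructor
      · simp [SC]
      · simp [SC, Finset.sum_range_succ]
    | succ m ih =>
      refine ⟨by push_cast; linarith [ih.2], ?_⟩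
      have h := L5 m
      rw [L4, L3] at h
      have h8 : 8 * SC (m + 2) = 16 * (8 * SC m) + 32 * (2 * (m:ℤ) + 1) * 4 ^ m := by
        rw [h]; ring
      rw [ih.1] at h8
      push_cast
      rw [show m + 1 + 1 = m + 2 from rfl, h8]
      ring
  rcases k with _ | n
  · exact (key 0).1
  · have := (key n).2
    push_cast at this ⊢
    linarith

private lemma L7 (k : ℕ) : 4 * (∑ j ∈ range (k + 1),
      ((2 * j).choose j : ℤ) * (2 * (k - j)).choose (k - j) * (6 * j + 1) * (6 * (k - j : ℕ) + 1))
    = 4 ^ k * (18 * (k:ℤ)^2 + 6 * k + 4) := by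
  have conv1 : (∑ j ∈ range (k + 1),
      ((2 * j).choose j : ℤ) * (2 * (k - j)).choose (k - j) * (6 * j + 1) * (6 * (k - j : ℕ) + 1))
      = 36 * SC k + (6 * (k:ℤ) + 1) * SA k := by
    have expand : (∑ j ∈ range (k + 1),
        ((2 * j).choose j : ℤ) * (2 * (k - j)).choose (k - j) * (6 * j + 1) * (6 * (k - j : ℕ) + 1))
        = ∑ j ∈ range (k+1),
          (36 * ((j:ℤ) * ((k:ℤ) - j) * (aa j * aa (k - j))) + (6*(k:ℤ)+1) * (aa j * aa (k - j))) := by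
      apply Finset.sum_congr rfl
      intro j hj
      have hj' : j ≤ k := by simpa [Nat.lt_succ_iff] using hj
      have hc : ((k - j : ℕ) : ℤ) = (k : ℤ) - j := by rw [Nat.cast_sub hj']
      rw [hc]
      unfold aa
      ring
    rw [expand, Finset.sum_add_distrib, ← Finset.mul_sum, ← Finset.mul_sum]
    unfold SC SA
    ring
  rw [conv1, L3]
  have h6 := L6 k
  linarith [h6, sq_nonneg ((k:ℤ))]


private def TT (n : ℕ) : ℤ :=
  ∑ k ∈ range (n+1), (-1)^k * 2^(n - k) * (18 * (k:ℤ)^2 + 6 * k + 4)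

private lemma L8 (n : ℕ) : TT n = (-1)^n * (6 * (n:ℤ)^2 + 10 * n + 4) := by
  induction n with
  | zero => simp [TT]
  | succ m ih =>
    have split : TT (m+1) = 2 * TT m + (-1)^(m+1) * (18 * ((m:ℤ)+1)^2 + 6 * ((m:ℤ)+1) + 4) := by
      unfold TT
      rw [Finset.sum_range_succ]
      have congr1 : ∀ k ∈ range (m+1),
          (-1:ℤ)^k * 2^(m + 1 - k) * (18 * (k:ℤ)^2 + 6 * k + 4)
          = 2 * ((-1:ℤ)^k * 2^(m - k) * (18 * (k:ℤ)^2 + 6 * k + 4)) := by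
        intro k hk
        have hk' : k ≤ m := by simpa [Nat.lt_succ_iff] using hk
        have : m + 1 - k = (m - k) + 1 := by omega
        rw [this, pow_succ]
        ring
      rw [Finset.sum_congr rfl congr1, ← Finset.mul_sum]
      push_cast
      simp
    rw [split, ih, pow_succ]
    push_cast
    ring

theorem stmt_11 (p : ℕ) (hp : p.Prime) (hodd : Odd p) :
    (p : ℤ) ∣ ∑ k ∈ Finset.range p, (-1 : ℤ) ^ k * 2 ^ (3 * (p - 1 - k)) *
      ∑ j ∈ Finset.range (k + 1),
        ((2 * j).choose j : ℤ) * (2 * (k - j)).choose (k - j) * (6 * j + 1) * (6 * (k - j : ℕ) + 1) := by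
  obtain ⟨n, hn⟩ : ∃ n, p = n + 1 := ⟨p - 1, by have := hp.pos; omega⟩
  subst hn
  set S : ℤ := ∑ k ∈ Finset.range (n+1), (-1 : ℤ) ^ k * 2 ^ (3 * (n + 1 - 1 - k)) *
      ∑ j ∈ Finset.range (k + 1),
        ((2 * j).choose j : ℤ) * (2 * (k - j)).choose (k - j) * (6 * j + 1) * (6 * (k - j : ℕ) + 1)
    with hS
  have h4S : 4 * S = 2^(2*n) * TT n := by
    rw [hS, Finset.mul_sum]
    unfold TT
    rw [Finset.mul_sum]
    apply Finset.sum_congr rfl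
    intro k hk
    have hk' : k ≤ n := by simpa [Nat.lt_succ_iff] using hk
    have h1 : n + 1 - 1 - k = n - k := by omega
    rw [h1]
    have step1 : 4 * ((-1 : ℤ) ^ k * 2 ^ (3 * (n - k)) *
        ∑ j ∈ Finset.range (k + 1),
          ((2 * j).choose j : ℤ) * (2 * (k - j)).choose (k - j) * (6 * j + 1) * (6 * (k - j : ℕ) + 1))
        = (-1 : ℤ) ^ k * 2 ^ (3 * (n - k)) * (4 ^ k * (18 * (k:ℤ)^2 + 6 * k + 4)) := by
      rw [← L7 k]; ring
    rw [step1]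
    have hpow : (2:ℤ) ^ (3 * (n - k)) * 4 ^ k = 2 ^ (2*n) * 2 ^ (n - k) := by
      rw [show (4:ℤ) = 2^2 from rfl, ← pow_mul, ← pow_add, ← pow_add]
      congr 1
      omega
    calc (-1 : ℤ) ^ k * 2 ^ (3 * (n - k)) * (4 ^ k * (18 * (k:ℤ)^2 + 6 * k + 4))
        = (2 ^ (3 * (n-k)) * 4 ^ k) * ((-1:ℤ)^k * (18 * (k:ℤ)^2 + 6 * k + 4)) := by ring
      _ = (2 ^ (2*n) * 2 ^ (n-k)) * ((-1:ℤ)^k * (18 * (k:ℤ)^2 + 6 * k + 4)) := by rw [hpow]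
      _ = 2 ^ (2*n) * ((-1:ℤ)^k * 2^(n-k) * (18 * (k:ℤ)^2 + 6 * k + 4)) := by ring
  have hdvdT : ((n:ℤ) + 1) ∣ TT n := by
    rw [L8]
    exact ⟨(-1)^n * (6 * n + 4), by ring⟩
  have hdvd4S : ((n:ℤ) + 1) ∣ 4 * S := by
    rw [h4S]
    exact Dvd.dvd.mul_left hdvdT _
  have hcast : ((n + 1 : ℕ) : ℤ) = (n:ℤ) + 1 := by push_cast; ring
  rw [hcast]
  have hprime : Prime ((n:ℤ) + 1) := by
    rw [← hcast]
    exact Nat.prime_iff_prime_int.mp hp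
  rcases hprime.dvd_mul.mp hdvd4S with h | h
  · exfalso
    have h4 : (n + 1 : ℕ) ∣ 4 := by
      have : ((n+1:ℕ):ℤ) ∣ ((4:ℕ):ℤ) := by rw [hcast]; exact_mod_cast h
      exact_mod_cast this
    have h2 : (n + 1) ∣ 2 := hp.dvd_of_dvd_pow (n := 2) (by norm_num; exact h4)
    have h3 : n + 1 ≤ 2 := Nat.le_of_dvd (by norm_num) h2
    have h5 := hp.two_le
    have h6 : n + 1 = 2 := by omega
    have h7 := Nat.odd_iff.mp hodd
    omega
  · exact h
end

section
/- For every positive integer n, 2 * Σ_{k=0}^{n-1} 4^(n-1-k) Σ_{j=0}^k binom(2j,j) binom(2k-2j,k-j) (6j+1)(6k-6j+1) = 4^(n-1) * n * (3n^2 - 3n + 2). -/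
open Finset

private def c (j : ℕ) : ℤ := ((2 * j).choose j : ℤ)

private lemma crec (j : ℕ) : ((j : ℤ) + 1) * c (j + 1) = (4 * j + 2) * c j := by
  have h := Nat.succ_mul_centralBinom_succ j
  have h' := congrArg (Nat.cast : ℕ → ℤ) h
  unfold c
  unfold Nat.centralBinom at h'
  push_cast at h' ⊢
  linarith

private lemma sum_reflect (f : ℕ → ℕ → ℤ) (m : ℕ) :
    ∑ j ∈ range (m+1), f j (m - j) = ∑ j ∈ range (m+1), f (m - j) j := by
  rw [← Finset.sum_range_reflect]
  apply sum_congr rfl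
  intro j hj
  have hj' : j ≤ m := Nat.lt_succ_iff.mp (mem_range.mp hj)
  have e1 : m + 1 - 1 - j = m - j := by omega
  have e2 : m - (m - j) = j := by omega
  rw [e1, e2]

private lemma twoT (m : ℕ) :
    2 * ∑ j ∈ range (m+1), (j : ℤ) * c j * c (m - j)
      = m * ∑ j ∈ range (m+1), c j * c (m - j) := by
  have hrefl := sum_reflect (fun a b => (a : ℤ) * c a * c b) m
  rw [two_mul]
  nth_rewrite 2 [hrefl]
  rw [mul_sum, ← sum_add_distrib]
  apply sum_congr rfl
  intro j hj
  have hj' : j ≤ m := Nat.lt_succ_iff.mp (mem_range.mp hj)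
  rw [Nat.cast_sub hj']
  ring

private lemma Trefl (k : ℕ) :
    ∑ j ∈ range (k+1), ((k - j : ℕ) : ℤ) * c j * c (k - j)
      = ∑ j ∈ range (k+1), (j : ℤ) * c j * c (k - j) := by
  have := sum_reflect (fun a b => (b : ℤ) * c a * c b) k
  rw [this]
  apply sum_congr rfl
  intro j _
  ring

private lemma Tshift (k : ℕ) :
    ∑ j ∈ range (k+2), (j : ℤ) * c j * c (k + 1 - j)
      = 4 * (∑ i ∈ range (k+1), (i : ℤ) * c i * c (k - i))
        + 2 * (∑ i ∈ range (k+1), c i * c (k - i)) := by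
  rw [Finset.sum_range_succ']
  simp only [Nat.succ_sub_succ, Nat.cast_zero, zero_mul, add_zero]
  rw [mul_sum, mul_sum, ← sum_add_distrib]
  apply sum_congr rfl
  intro i _
  have h := crec i
  push_cast
  linear_combination c (k - i) * h

private lemma S0 (k : ℕ) : ∑ j ∈ range (k+1), c j * c (k - j) = 4 ^ k := by
  induction k with
  | zero => simp [c]
  | succ k ih =>
    have hT : 2 * ∑ j ∈ range (k+1), (j : ℤ) * c j * c (k - j) = k * 4 ^ k := by
      rw [twoT k, ih]
    have key : ((k : ℤ) + 1) * ∑ j ∈ range (k+2), c j * c (k + 1 - j)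
        = ((k : ℤ) + 1) * 4 ^ (k+1) := by
      have h1 := twoT (k+1)
      push_cast at h1
      have h2 := Tshift k
      calc ((k : ℤ) + 1) * ∑ j ∈ range (k+2), c j * c (k + 1 - j)
          = 2 * ∑ j ∈ range (k+2), (j : ℤ) * c j * c (k + 1 - j) := by linarith
        _ = 2 * (4 * (∑ i ∈ range (k+1), (i : ℤ) * c i * c (k - i))
              + 2 * (∑ i ∈ range (k+1), c i * c (k - i))) := by rw [h2]
        _ = 4 * (2 * ∑ i ∈ range (k+1), (i : ℤ) * c i * c (k - i))
              + 4 * (∑ i ∈ range (k+1), c i * c (k - i)) := by ring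
        _ = 4 * ((k : ℤ) * 4 ^ k) + 4 * 4 ^ k := by rw [hT, ih]
        _ = ((k : ℤ) + 1) * 4 ^ (k+1) := by ring
    have hne : ((k : ℤ) + 1) ≠ 0 := by positivity
    exact mul_left_cancel₀ hne key

private lemma S2 (k : ℕ) :
    2 * ∑ j ∈ range (k+1), (j : ℤ) * ((k - j : ℕ) : ℤ) * c j * c (k - j)
      = (k : ℤ) * ((k : ℤ) - 1) * 4 ^ (k - 1) := by
  induction k with
  | zero => simp
  | succ k ih =>
    have hT : 2 * ∑ j ∈ range (k+1), (j : ℤ) * c j * c (k - j) = k * 4 ^ k := by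
      rw [twoT k, S0]
    have hshift : ∑ j ∈ range (k+2), (j : ℤ) * ((k + 1 - j : ℕ) : ℤ) * c j * c (k + 1 - j)
        = 4 * (∑ i ∈ range (k+1), (i : ℤ) * ((k - i : ℕ) : ℤ) * c i * c (k - i))
          + 2 * (∑ i ∈ range (k+1), ((k - i : ℕ) : ℤ) * c i * c (k - i)) := by
      rw [Finset.sum_range_succ']
      simp only [Nat.succ_sub_succ, Nat.cast_zero, zero_mul, add_zero]
      rw [mul_sum, mul_sum, ← sum_add_distrib]
      apply sum_congr rfl
      intro i _
      have h := crec i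
      push_cast
      linear_combination ((k - i : ℕ) : ℤ) * c (k - i) * h
    rw [hshift, Trefl]
    rcases Nat.eq_zero_or_pos k with hk0 | hkpos
    · subst hk0; simp
    · have hk1 : k - 1 + 1 = k := Nat.succ_pred_eq_of_pos hkpos
      have hpow : (4 : ℤ) ^ k = 4 * 4 ^ (k - 1) := by
        conv_lhs => rw [← hk1]
        rw [pow_succ]; ring
      have : (↑(k + 1) : ℤ) = (k : ℤ) + 1 := by push_cast; ring
      rw [this, Nat.add_sub_cancel]
      calc 2 * (4 * (∑ i ∈ range (k+1), (i : ℤ) * ((k - i : ℕ) : ℤ) * c i * c (k - i))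
              + 2 * ∑ j ∈ range (k+1), (j : ℤ) * c j * c (k - j))
          = 4 * (2 * ∑ i ∈ range (k+1), (i : ℤ) * ((k - i : ℕ) : ℤ) * c i * c (k - i))
            + 2 * (2 * ∑ j ∈ range (k+1), (j : ℤ) * c j * c (k - j)) := by ring
        _ = 4 * ((k : ℤ) * ((k : ℤ) - 1) * 4 ^ (k - 1)) + 2 * ((k : ℤ) * 4 ^ k) := by
            rw [ih, hT]
        _ = ((k : ℤ) + 1) * ((k : ℤ) + 1 - 1) * 4 ^ k := by rw [hpow]; ring

private lemma Iclosed (k : ℕ) :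
    2 * ∑ j ∈ range (k+1),
        ((2 * j).choose j : ℤ) * (2 * (k - j)).choose (k - j) * (6 * j + 1) * (6 * (k - j : ℕ) + 1)
      = 4 ^ k * (9 * (k : ℤ) ^ 2 + 3 * k + 2) := by
  have hform : ∑ j ∈ range (k+1),
        ((2 * j).choose j : ℤ) * (2 * (k - j)).choose (k - j) * (6 * j + 1) * (6 * (k - j : ℕ) + 1)
      = 36 * (∑ j ∈ range (k+1), (j : ℤ) * ((k - j : ℕ) : ℤ) * c j * c (k - j))
        + 6 * (∑ j ∈ range (k+1), (j : ℤ) * c j * c (k - j))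
        + 6 * (∑ j ∈ range (k+1), ((k - j : ℕ) : ℤ) * c j * c (k - j))
        + ∑ j ∈ range (k+1), c j * c (k - j) := by
    rw [mul_sum, mul_sum, mul_sum, ← sum_add_distrib, ← sum_add_distrib, ← sum_add_distrib]
    apply sum_congr rfl
    intro j _
    unfold c
    ring
  rw [hform, Trefl]
  have h2 := S2 k
  have hT : 2 * ∑ j ∈ range (k+1), (j : ℤ) * c j * c (k - j) = k * 4 ^ k := by
    rw [twoT k, S0]
  have h0 := S0 k
  rcases Nat.eq_zero_or_pos k with hk0 | hkpos
  · subst hk0; simp [c]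
  · have hk1 : k - 1 + 1 = k := Nat.succ_pred_eq_of_pos hkpos
    have hpow : (4 : ℤ) ^ k = 4 * 4 ^ (k - 1) := by
      conv_lhs => rw [← hk1]
      rw [pow_succ]; ring
    rw [hpow] at h0 hT ⊢
    linear_combination 36 * h2 + 12 * hT + 2 * h0

private lemma sum_poly (n : ℕ) :
    ∑ k ∈ range n, (9 * (k : ℤ) ^ 2 + 3 * k + 2) = n * (3 * (n : ℤ) ^ 2 - 3 * n + 2) := by
  induction n with
  | zero => simp
  | succ n ih =>
    rw [Finset.sum_range_succ, ih]
    push_cast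
    ring

theorem stmt_14 (n : ℕ) (hn : 0 < n) :
    2 * ∑ k ∈ Finset.range n, (4 : ℤ) ^ (n - 1 - k) *
      ∑ j ∈ Finset.range (k + 1),
        ((2 * j).choose j : ℤ) * (2 * (k - j)).choose (k - j) * (6 * j + 1) * (6 * (k - j : ℕ) + 1)
      = 4 ^ (n - 1) * n * (3 * (n : ℤ) ^ 2 - 3 * n + 2) := by
  rw [mul_sum]
  have step : ∀ k ∈ range n,
      2 * ((4 : ℤ) ^ (n - 1 - k) *
        ∑ j ∈ Finset.range (k + 1),
          ((2 * j).choose j : ℤ) * (2 * (k - j)).choose (k - j) * (6 * j + 1) * (6 * (k - j : ℕ) + 1))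
      = 4 ^ (n - 1) * (9 * (k : ℤ) ^ 2 + 3 * k + 2) := by
    intro k hk
    have hk' : k ≤ n - 1 := Nat.le_sub_one_of_lt (mem_range.mp hk)
    have hpow : (4 : ℤ) ^ (n - 1 - k) * 4 ^ k = 4 ^ (n - 1) := by
      rw [← pow_add, Nat.sub_add_cancel hk']
    calc 2 * ((4 : ℤ) ^ (n - 1 - k) *
          ∑ j ∈ Finset.range (k + 1),
            ((2 * j).choose j : ℤ) * (2 * (k - j)).choose (k - j) * (6 * j + 1) * (6 * (k - j : ℕ) + 1))
        = (4 : ℤ) ^ (n - 1 - k) *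
          (2 * ∑ j ∈ Finset.range (k + 1),
            ((2 * j).choose j : ℤ) * (2 * (k - j)).choose (k - j) * (6 * j + 1) * (6 * (k - j : ℕ) + 1)) := by
          ring
      _ = (4 : ℤ) ^ (n - 1 - k) * (4 ^ k * (9 * (k : ℤ) ^ 2 + 3 * k + 2)) := by rw [Iclosed]
      _ = 4 ^ (n - 1) * (9 * (k : ℤ) ^ 2 + 3 * k + 2) := by rw [← mul_assoc, hpow]
  rw [sum_congr rfl step, ← mul_sum, sum_poly]
  ring
end

section
/- In the ring of formal power series ℚ[[x]], the square of Σ_{j≥0} j * binom(2j,j) x^j equals Σ_{k≥0} (4^(k+1)(k+1)(k+2)/2) x^(k+2). -/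
open PowerSeries

noncomputable def f16 : ℚ⟦X⟧ := PowerSeries.mk fun j => ((2*j).choose j : ℚ)
noncomputable def u16 : ℚ⟦X⟧ := PowerSeries.mk fun n => (4:ℚ)^n

lemma l1 : ((1:ℚ⟦X⟧) - 4 * X) * u16 = 1 := by
  have h : ((1:ℚ⟦X⟧) - 4 * X) * u16 = u16 - C (4:ℚ) * (X * u16) := by
    rw [show (4:ℚ⟦X⟧) = C (4:ℚ) by rw [map_ofNat]]
    ring
  rw [h]
  ext n
  cases n with
  | zero => simp [u16]
  | succ n =>
    rw [map_sub, coeff_C_mul, coeff_succ_X_mul]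
    simp [u16, pow_succ]
    ring

lemma l2 : ((1:ℚ⟦X⟧) - 4 * X) * (d⁄dX ℚ f16) = 2 * f16 := by
  have h : ((1:ℚ⟦X⟧) - 4 * X) * (d⁄dX ℚ f16)
      = (d⁄dX ℚ f16) - C (4:ℚ) * (X * (d⁄dX ℚ f16)) := by
    rw [show (4:ℚ⟦X⟧) = C (4:ℚ) by rw [map_ofNat]]
    ring
  rw [h]
  ext n
  rw [map_sub, coeff_C_mul]
  cases n with
  | zero =>
    simp [f16, coeff_derivative]
    rw [show (2:ℚ⟦X⟧) = C (2:ℚ) by rw [map_ofNat]]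
    norm_num
  | succ n =>
    rw [coeff_succ_X_mul, coeff_derivative, coeff_derivative]
    have key := Nat.succ_mul_centralBinom_succ (n+1)
    rw [Nat.centralBinom_eq_two_mul_choose, Nat.centralBinom_eq_two_mul_choose] at key
    have keyq : ((n+1+1 : ℕ) : ℚ) * ((2*(n+1+1)).choose (n+1+1) : ℚ)
        = 2 * (2*(n+1)+1) * ((2*(n+1)).choose (n+1) : ℚ) := by
      exact_mod_cast congrArg (fun m : ℕ => (m : ℚ)) key
    simp only [f16, coeff_mk]
    rw [show (2:ℚ⟦X⟧) = C (2:ℚ) by rw [map_ofNat], coeff_C_mul, coeff_mk]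
    push_cast at keyq ⊢
    linarith [keyq]

lemma e1 : d⁄dX ℚ ((1:ℚ⟦X⟧) - 4 * X) = -4 := by
  rw [show (4:ℚ⟦X⟧) = C (4:ℚ) by rw [map_ofNat]]
  rw [map_sub, Derivation.leibniz, derivative_C, derivative_X]
  simp

lemma l3 : ((1:ℚ⟦X⟧) - 4 * X) * f16 ^ 2 = 1 := by
  apply PowerSeries.derivative.ext
  · rw [Derivation.leibniz, pow_two, Derivation.leibniz, e1]
    simp only [smul_eq_mul, Derivation.map_one_eq_zero]
    linear_combination (2 * f16) * l2
  · rw [map_mul, map_sub, map_pow, map_one]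
    simp [f16]

lemma l5 : f16 ^ 2 = u16 := by
  calc f16 ^ 2 = (u16 * ((1:ℚ⟦X⟧) - 4 * X)) * f16 ^ 2 := by
        rw [mul_comm u16, l1, one_mul]
    _ = u16 * (((1:ℚ⟦X⟧) - 4 * X) * f16 ^ 2) := by ring
    _ = u16 := by rw [l3, mul_one]

lemma l4 : d⁄dX ℚ f16 = 2 * f16 * u16 := by
  calc d⁄dX ℚ f16 = (u16 * ((1:ℚ⟦X⟧) - 4 * X)) * d⁄dX ℚ f16 := by
        rw [mul_comm u16, l1, one_mul]
    _ = u16 * (((1:ℚ⟦X⟧) - 4 * X) * d⁄dX ℚ f16) := by ring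
    _ = 2 * f16 * u16 := by rw [l2]; ring

lemma lu : d⁄dX ℚ u16 = 4 * u16 ^ 2 := by
  have h0 : d⁄dX ℚ (((1:ℚ⟦X⟧) - 4 * X) * u16) = 0 := by
    rw [l1, Derivation.map_one_eq_zero]
  rw [Derivation.leibniz, e1] at h0
  simp only [smul_eq_mul] at h0
  have h1 : ((1:ℚ⟦X⟧) - 4 * X) * d⁄dX ℚ u16 = 4 * u16 := by linear_combination h0
  calc d⁄dX ℚ u16 = (u16 * ((1:ℚ⟦X⟧) - 4 * X)) * d⁄dX ℚ u16 := by
        rw [mul_comm u16, l1, one_mul]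
    _ = u16 * (((1:ℚ⟦X⟧) - 4 * X) * d⁄dX ℚ u16) := by ring
    _ = 4 * u16 ^ 2 := by rw [h1]; ring

lemma l7b : (8:ℚ⟦X⟧) * PowerSeries.mk (fun k => (4 : ℚ) ^ (k + 1) * (k + 1) * (k + 2) / 2)
    = d⁄dX ℚ (d⁄dX ℚ u16) := by
  ext k
  rw [show (8:ℚ⟦X⟧) = C (8:ℚ) by rw [map_ofNat], coeff_C_mul, coeff_derivative,
    coeff_derivative]
  simp only [u16, coeff_mk]
  push_cast
  ring

lemma l7 : PowerSeries.mk (fun k => (4 : ℚ) ^ (k + 1) * (k + 1) * (k + 2) / 2)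
    = 4 * u16 ^ 3 := by
  have h2 : d⁄dX ℚ (d⁄dX ℚ u16) = 32 * u16 ^ 3 := by
    rw [lu, show (4:ℚ⟦X⟧) = C (4:ℚ) by rw [map_ofNat], Derivation.leibniz, derivative_C,
      pow_two, Derivation.leibniz, lu]
    simp only [smul_eq_mul]
    rw [show C (4:ℚ) = (4:ℚ⟦X⟧) by rw [map_ofNat]]
    ring
  have h8 : (8:ℚ⟦X⟧) ≠ 0 := by
    intro h
    have := congrArg (constantCoeff (R := ℚ)) h
    rw [map_ofNat, map_zero] at this
    norm_num at this
  apply mul_left_cancel₀ h8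
  rw [l7b, h2]
  ring

lemma l6 : PowerSeries.mk (fun j => (j : ℚ) * (2 * j).choose j) = X * d⁄dX ℚ f16 := by
  ext n
  cases n with
  | zero => simp
  | succ n =>
    rw [coeff_succ_X_mul, coeff_derivative]
    simp [f16]
    ring

theorem stmt_16 :
    (PowerSeries.mk fun j => (j : ℚ) * (2 * j).choose j) ^ 2
      = PowerSeries.X ^ 2 *
        PowerSeries.mk (fun k => (4 : ℚ) ^ (k + 1) * (k + 1) * (k + 2) / 2) := by
  rw [l6, l7, mul_pow, l4]
  linear_combination (4 * X ^ 2 * u16 ^ 2) * l5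
end
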